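/- Let Π = (δ, Σ, C) be an LCL problem. If Π has a uniform certificate for O(log* n) solvability with label set Σ_T and depth d, then Π has a uniform certificate for O(log* n) solvability with the same label set Σ_T and depth d + 1. -/

import Mathlib

/-- The set of configurations `C` is closed under permutations of the children. -/
def PermClosed {L : Type*} (δ : ℕ) (C : Set (L × (Fin δ → L))) : Prop :=
  ∀ (σ : L) (c : Fin δ → L) (π : Equiv.Perm (Fin δ)), (σ, c) ∈ C → (σ, c ∘ π) ∈ C

/-- A labeling `T` of the complete `δ`-ary tree of depth `d` (vertices are words
over `Fin δ` of length at most `d`, the root is the empty word, the children of a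
word `w` of length `< d` are the words `w ++ [j]`) is correct w.r.t. the
configurations `C`. -/
def CorrectLabeling {L : Type*} (δ : ℕ) (C : Set (L × (Fin δ → L))) (d : ℕ)
    (T : List (Fin δ) → L) : Prop :=
  ∀ w : List (Fin δ), w.length < d → (T w, fun j : Fin δ => T (w ++ [j])) ∈ C

/-- A uniform certificate for `O(log* n)` solvability with label set `ST` and
depth `d ≥ 1`: a family `(T σ)_{σ ∈ ST}` of correct labelings of the complete
`δ`-ary tree of depth `d` using only labels from `ST`, all agreeing on the
labels of all leaves, with `T σ` labeling the root with `σ`. -/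
def UniformCert {L : Type*} (δ : ℕ) (C : Set (L × (Fin δ → L))) (ST : Set L)
    (d : ℕ) : Prop :=
  1 ≤ d ∧
  ∃ T : L → List (Fin δ) → L,
    (∀ σ ∈ ST, CorrectLabeling δ C d (T σ)) ∧
    (∀ σ ∈ ST, ∀ w : List (Fin δ), w.length ≤ d → T σ w ∈ ST) ∧
    (∀ σ ∈ ST, ∀ σ' ∈ ST, ∀ w : List (Fin δ), w.length = d → T σ w = T σ' w) ∧
    (∀ σ ∈ ST, T σ [] = σ)

/-- if an LCL problem `Π = (δ, Σ, C)` has a uniform certificate for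
`O(log* n)` solvability with label set `ST` and depth `d`, then it has one with
the same label set and depth `d + 1`. -/
theorem stmt6 {L : Type*} [Fintype L] [Nonempty L] (δ : ℕ) (hδ : 1 ≤ δ)
    (C : Set (L × (Fin δ → L))) (hperm : PermClosed δ C)
    (ST : Set L) (d : ℕ) (h : UniformCert δ C ST d) :
    UniformCert δ C ST (d + 1) := by
  obtain ⟨hd, T, hcorr, hmem, hleaf, hroot⟩ := h
  have j0 : Fin δ := ⟨0, hδ⟩
  refine ⟨le_trans hd (Nat.le_succ d),
    fun σ w => if w.length ≤ d then T σ w else T (T σ w.dropLast) [w.getLastD j0],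
    ?_, ?_, ?_, ?_⟩
  · intro σ hσ w hw
    by_cases hlt : w.length < d
    · have h1 : w.length ≤ d := hlt.le
      have h2 : ∀ j : Fin δ, (w ++ [j]).length ≤ d := by
        intro j; simpa using hlt
      simp only [if_pos h1, if_pos (h2 _)]
      exact hcorr σ hσ w hlt
    · have heq : w.length = d := by omega
      have h2 : ∀ j : Fin δ, ¬ (w ++ [j]).length ≤ d := by
        intro j; simp; omega
      simp only [if_pos heq.le, if_neg (h2 _)]
      have hτ : T σ w ∈ ST := hmem σ hσ w heq.le
      have := hcorr _ hτ [] (by simp; omega)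
      simp only [List.nil_append] at this
      rw [hroot _ hτ] at this
      have hdrop : ∀ j : Fin δ, (w ++ [j]).dropLast = w := by
        intro j; simp
      have hlast : ∀ j : Fin δ, (w ++ [j]).getLastD j0 = j := by
        intro j
        rw [List.getLastD_eq_getLast?, List.getLast?_concat]
        rfl
      convert this using 2
      funext j
      rw [hdrop, hlast]
  · intro σ hσ w hw
    by_cases h1 : w.length ≤ d
    · simp only [if_pos h1]; exact hmem σ hσ w h1
    · simp only [if_neg h1]
      have hlen : w.dropLast.length ≤ d := by
        simp only [List.length_dropLast]; omega
      exact hmem _ (hmem σ hσ _ hlen) _ (by simpa using hd)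
  · intro σ hσ σ' hσ' w hw
    have h1 : ¬ w.length ≤ d := by omega
    simp only [if_neg h1]
    have hlen : w.dropLast.length = d := by
      simp only [List.length_dropLast]; omega
    rw [hleaf σ hσ σ' hσ' _ hlen]
  · intro σ hσ
    simp only [List.length_nil, if_pos (Nat.zero_le d)]
    exact hroot σ hσ
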